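/- Let (X,B,μ,(T_1,…,T_l)) be a freely generated totally ergodic system and let p_1,…,p_l : ℤ^d → ℤ be nonconstant linear functions. Then there exists a constant C such that for any f ∈ L^∞(μ) and any Følner sequence {Φ_N} in ℤ^d, lim_{N→∞} ‖(1/|Φ_N|) Σ_{u∈Φ_N} T_1^{p_1(u)}⋯T_l^{p_l(u)} f‖_{L²(μ)} ≤ C ⦀f⦀₂, where ⦀·⦀₂ is the Host–Kra seminorm of order 2 (computed with respect to any of the ergodic transformations T_1^{c_1}⋯T_l^{c_l}, on which it does not depend). -/

import Mathlib

open MeasureTheory Filter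
open scoped ENNReal NNReal

/-- A Følner sequence of finite subsets of an additive group: translates of `Φ N`
asymptotically almost coincide with `Φ N`. -/
def IsFolner {G : Type*} [AddCommGroup G] [DecidableEq G] (Φ : ℕ → Finset G) : Prop :=
  (∀ N, (Φ N).Nonempty) ∧
  ∀ g : G, Filter.Tendsto
    (fun N => (((((Φ N).image (fun x => g + x)) \ Φ N) ∪
        (Φ N \ ((Φ N).image (fun x => g + x)))).card : ℝ) / (Φ N).card)
    Filter.atTop (nhds 0)

/-- The `k`-th cube space `X^{2^k}`, realized as an iterated product. -/
def Cube (X : Type*) : ℕ → Type _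
  | 0 => X
  | k + 1 => Cube X k × Cube X k

def cubeMeasurableSpace {X : Type*} [m : MeasurableSpace X] :
    ∀ k, MeasurableSpace (Cube X k)
  | 0 => m
  | k + 1 => @Prod.instMeasurableSpace _ _ (cubeMeasurableSpace k) (cubeMeasurableSpace k)

instance instCubeMS {X : Type*} [MeasurableSpace X] (k : ℕ) : MeasurableSpace (Cube X k) :=
  cubeMeasurableSpace k

/-- The diagonal self-map `T^{[k]} = T × ⋯ × T` of the cube space. -/
def cubeMap {X : Type*} (T : X → X) : ∀ k, Cube X k → Cube X k
  | 0 => T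
  | k + 1 => fun p => (cubeMap T k p.1, cubeMap T k p.2)

/-- The tensor power `f ⊗ ⋯ ⊗ f` (`2^k` times) of a function on the cube space. -/
def cubeFun {X : Type*} (f : X → ℝ) : ∀ k, Cube X k → ℝ
  | 0 => f
  | k + 1 => fun p => cubeFun f k p.1 * cubeFun f k p.2

/-- `ν` is the sequence of Host–Kra cube measures `μ^{[k]}_T`: `ν 0 = μ` and `ν (k+1)`
is the relatively independent square of `ν k` over the σ-algebra of
`T^{[k]}`-invariant sets. -/
def IsHKSeq {X : Type*} [MeasurableSpace X] (μ : Measure X) (T : X → X)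
    (ν : ∀ k, Measure (Cube X k)) : Prop :=
  ν 0 = μ ∧
  ∀ k, IsProbabilityMeasure (ν k) ∧
    ∀ F G : Cube X k → ℝ, Measurable F → Measurable G →
      (∃ C, ∀ x, |F x| ≤ C) → (∃ C, ∀ x, |G x| ≤ C) →
      ∫ (p : Cube X k × Cube X k), F p.1 * G p.2 ∂(ν (k + 1)) =
        ∫ x, (MeasureTheory.condExp (MeasurableSpace.invariants (cubeMap T k)) (ν k) F x) *
          (MeasureTheory.condExp (MeasurableSpace.invariants (cubeMap T k)) (ν k) G x) ∂(ν k)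

/-- The Host–Kra seminorm `⦀f⦀_{k,T}`, computed from a sequence `ν` of cube measures:
`⦀f⦀_{k}^{2^k} = ∫ ∏_{j} f(x_j) dν k`. -/
noncomputable def hkSeminorm {X : Type*} [MeasurableSpace X]
    (ν : ∀ k, Measure (Cube X k)) (k : ℕ) (f : X → ℝ) : ℝ :=
  (∫ x, cubeFun f k x ∂(ν k)) ^ ((1 : ℝ) / 2 ^ k)

/-- An ED-set of polynomial maps `ℤ^d → ℤ`, presented as an `r × l` matrix of functions:
none is a nonzero constant, no two (distinct) entries differ by a nonzero constant,
no row is identically zero, and no two rows are identical. -/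
def IsEDSet {r l d : ℕ} (p : Fin r → Fin l → (Fin d → ℤ) → ℤ) : Prop :=
  (∀ i j, ¬∃ c : ℤ, c ≠ 0 ∧ ∀ u, p i j u = c) ∧
  (∀ i₁ j₁ i₂ j₂, (i₁, j₁) ≠ (i₂, j₂) →
    ¬∃ c : ℤ, c ≠ 0 ∧ ∀ u, p i₁ j₁ u - p i₂ j₂ u = c) ∧
  (∀ i, ∃ j, p i j ≠ 0) ∧
  (∀ i₁ i₂, i₁ ≠ i₂ → ∃ j, p i₁ j ≠ p i₂ j)



section Alg
variable {X : Type*} [MeasurableSpace X] {μ : Measure X}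

theorem mp_zpow (σ : Equiv.Perm X) (h : MeasurePreserving (⇑σ) μ μ)
    (h' : MeasurePreserving (⇑σ⁻¹) μ μ) : ∀ n : ℤ, MeasurePreserving (⇑(σ ^ n)) μ μ := by
  have key : ∀ n : ℕ, MeasurePreserving (⇑(σ ^ (n:ℤ))) μ μ ∧
      MeasurePreserving (⇑(σ ^ (-(n:ℤ)))) μ μ := by
    intro n
    induction n with
    | zero => constructor <;> simpa using MeasurePreserving.id μ
    | succ k ih =>
      constructor
      · have : σ ^ ((k:ℤ)+1) = σ ^ (k:ℤ) * σ := by rw [zpow_add, zpow_one]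
        rw [show ((k+1:ℕ):ℤ) = (k:ℤ)+1 by push_cast; ring, this]
        simpa [Equiv.Perm.coe_mul] using ih.1.comp h
      · have : σ ^ (-((k:ℤ)+1)) = σ ^ (-(k:ℤ)) * σ⁻¹ := by
          rw [← zpow_neg_one, ← zpow_add]; ring_nf
        rw [show (-((k+1:ℕ):ℤ)) = -((k:ℤ)+1) by push_cast; ring, this]
        simpa [Equiv.Perm.coe_mul] using ih.2.comp h'
  intro n
  rcases le_or_gt 0 n with hn | hn
  · obtain ⟨m, rfl⟩ := Int.eq_ofNat_of_zero_le hn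
    exact (key m).1
  · obtain ⟨m, rfl⟩ : ∃ m : ℕ, n = -(m:ℤ) := ⟨n.natAbs, by omega⟩
    exact (key m).2

theorem mp_list_prod : ∀ (L : List (Equiv.Perm X)),
    (∀ σ ∈ L, MeasurePreserving (⇑σ) μ μ) → MeasurePreserving (⇑L.prod) μ μ := by
  intro L
  induction L with
  | nil => intro _; simpa using MeasurePreserving.id μ
  | cons a t ih =>
    intro h
    rw [List.prod_cons]
    have ha := h a (by simp)
    have ht := ih (fun σ hσ => h σ (by simp [hσ]))
    simpa [Equiv.Perm.coe_mul] using ha.comp ht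

theorem ofFn_prod_mul {M : Type*} [Monoid M] :
    ∀ {l : ℕ} (A B : Fin l → M), (∀ i j, Commute (A i) (B j)) →
      (List.ofFn fun j => A j * B j).prod = (List.ofFn A).prod * (List.ofFn B).prod := by
  intro l
  induction l with
  | zero => intro A B _; simp
  | succ k ih =>
    intro A B hcomm
    rw [List.ofFn_succ, List.ofFn_succ (f := A), List.ofFn_succ (f := B),
      List.prod_cons, List.prod_cons, List.prod_cons,
      ih (fun i => A i.succ) (fun i => B i.succ) (fun i j => hcomm i.succ j.succ)]
    have h1 : Commute (B 0) (List.ofFn fun i => A i.succ).prod := by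
      apply Commute.list_prod_right
      intro x hx
      rw [List.mem_ofFn] at hx
      obtain ⟨i, rfl⟩ := hx
      exact (hcomm i.succ 0).symm
    calc A 0 * B 0 * ((List.ofFn fun i => A i.succ).prod * (List.ofFn fun i => B i.succ).prod)
        = A 0 * (B 0 * (List.ofFn fun i => A i.succ).prod) * (List.ofFn fun i => B i.succ).prod := by
          group
      _ = A 0 * ((List.ofFn fun i => A i.succ).prod * B 0) * (List.ofFn fun i => B i.succ).prod := by
          rw [h1.eq]
      _ = A 0 * (List.ofFn fun i => A i.succ).prod * (B 0 * (List.ofFn fun i => B i.succ).prod) := by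
          group

end Alg


theorem sum_decomp_aux {X : Type*} {d : ℕ} (S : (Fin d → ℤ) → X → X) (f h0 g : X → ℝ) (c : ℝ)
    (s s' : Finset (Fin d → ℤ)) (e : Fin d → ℤ) (x : X)
    (e1 : ∀ u, f (S u x) = h0 (S u x) + c + (g (S u x) - g (S (e + u) x)))
    (e2 : ∑ u ∈ s, g (S (e + u) x) = ∑ v ∈ s', g (S v x)) :
    ∑ u ∈ s, f (S u x) = (∑ u ∈ s, h0 (S u x)) + (s.card : ℝ) * c +
        ((∑ u ∈ s \ s', g (S u x)) - (∑ u ∈ s' \ s, g (S u x))) := by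
  rw [Finset.sum_congr rfl (fun u _ => e1 u)]
  rw [Finset.sum_add_distrib, Finset.sum_add_distrib, Finset.sum_sub_distrib]
  rw [Finset.sum_const, e2]
  rw [Finset.sum_sdiff_sub_sum_sdiff]
  simp [nsmul_eq_mul]

theorem ennreal_arith (a b n : ℕ) (G : ℝ) (hG : 0 ≤ G) :
    ((‖((n:ℝ))⁻¹‖₊ : ℝ≥0∞)) * ((a : ℝ≥0∞) * ENNReal.ofReal G + (b : ℝ≥0∞) * ENNReal.ofReal G)
      = ENNReal.ofReal ((((a:ℝ) + (b:ℝ)) / (n:ℝ)) * G) := by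
  have h1 : ((‖((n:ℝ))⁻¹‖₊ : ℝ≥0∞)) = ENNReal.ofReal ((n:ℝ))⁻¹ := by
    rw [show ((‖((n:ℝ))⁻¹‖₊ : ℝ≥0∞)) = ‖((n:ℝ))⁻¹‖ₑ from rfl, Real.enorm_eq_ofReal_abs,
      abs_of_nonneg (by positivity)]
  have h2 : ∀ m : ℕ, ((m : ℝ≥0∞)) = ENNReal.ofReal (m : ℝ) := fun m =>
    (ENNReal.ofReal_natCast m).symm
  rw [h1, h2 a, h2 b, ← ENNReal.ofReal_mul (by positivity), ← ENNReal.ofReal_mul (by positivity),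
    ← ENNReal.ofReal_add (by positivity) (by positivity), ← ENNReal.ofReal_mul (by positivity)]
  congr 1
  rcases Nat.eq_zero_or_pos n with hn | hn
  · subst hn; simp
  · have : (0:ℝ) < n := by exact_mod_cast hn
    field_simp

section MeanErgodic
variable {X : Type*} [MeasurableSpace X] {μ : Measure X} {d : ℕ}

theorem mean_ergodic_limsup [IsProbabilityMeasure μ]
    (S : (Fin d → ℤ) → X → X)
    (hmp : ∀ u, MeasurePreserving (S u) μ μ)
    (hadd : ∀ u v x, S (u + v) x = S u (S v x))
    (hzero : ∀ x, S 0 x = x)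
    (e : Fin d → ℤ) (herg : Ergodic (S e) μ)
    (f : X → ℝ) (hf : MemLp f ⊤ μ)
    (Φ : ℕ → Finset (Fin d → ℤ)) (hΦ : IsFolner Φ) :
    Filter.limsup (fun N => (eLpNorm
        (fun x => ((Φ N).card : ℝ)⁻¹ * ∑ u ∈ Φ N, f (S u x)) 2 μ).toReal)
      Filter.atTop ≤ |∫ x, f x ∂μ| := by
  have hf2 : MemLp f 2 μ := hf.mono_exponent le_top
  set c := ∫ x, f x ∂μ with hc
  clear_value c
  have hinv1 : ∀ x, S (-e) (S e x) = x := by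
    intro x; rw [← hadd]; simpa using hzero x
  have hinv2 : ∀ x, S e (S (-e) x) = x := by
    intro x; rw [← hadd]; simpa using hzero x
  -- the Koopman operators
  set U := MeasureTheory.Lp.compMeasurePreservingₗᵢ (E := ℝ) (p := 2) ℝ (S e) (hmp e) with hU
  set V := MeasureTheory.Lp.compMeasurePreservingₗᵢ (E := ℝ) (p := 2) ℝ (S (-e)) (hmp (-e)) with hV
  have hUcoe : ∀ h : Lp ℝ 2 μ, (U h : X → ℝ) =ᵐ[μ] (h : X → ℝ) ∘ (S e) := fun h =>
    MeasureTheory.Lp.coeFn_compMeasurePreserving h (hmp e)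
  have hVcoe : ∀ h : Lp ℝ 2 μ, (V h : X → ℝ) =ᵐ[μ] (h : X → ℝ) ∘ (S (-e)) := fun h =>
    MeasureTheory.Lp.coeFn_compMeasurePreserving h (hmp (-e))
  have hUV : ∀ h : Lp ℝ 2 μ, U (V h) = h := by
    intro h
    apply MeasureTheory.Lp.ext
    calc (U (V h) : X → ℝ) =ᵐ[μ] (V h : X → ℝ) ∘ (S e) := hUcoe (V h)
      _ =ᵐ[μ] ((h : X → ℝ) ∘ (S (-e))) ∘ (S e) :=
          (hmp e).quasiMeasurePreserving.ae_eq_comp (hVcoe h)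
      _ = (h : X → ℝ) := by funext x; simp [Function.comp, hinv1 x]
  set W : Submodule ℝ (Lp ℝ 2 μ) := LinearMap.range (LinearMap.id - U.toLinearMap) with hW
  -- elements orthogonal to W are a.e. constant
  have hWperp : ∀ h : Lp ℝ 2 μ, h ∈ Wᗮ → ∃ k : ℝ, (h : X → ℝ) =ᵐ[μ] fun _ => k := by
    intro h hh
    have h1 : ∀ g : Lp ℝ 2 μ, inner (𝕜 := ℝ) (g - U g) h = 0 := by
      intro g
      exact (Submodule.mem_orthogonal W h).mp hh _ ⟨g, by simp⟩
    have h2 : inner (𝕜 := ℝ) (V h) h = inner (𝕜 := ℝ) h h := by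
      have := h1 (V h)
      rw [inner_sub_left, sub_eq_zero] at this
      rw [this, hUV h]
    have h3 : inner (𝕜 := ℝ) h (U h) = inner (𝕜 := ℝ) h h := by
      have := U.inner_map_map (V h) h
      rw [hUV h] at this
      rw [this, h2]
    have h4 : U h = h := by
      have hexp : ‖U h - h‖ ^ 2 = ‖U h‖ ^ 2 - 2 * inner (𝕜 := ℝ) (U h) h + ‖h‖ ^ 2 :=
        norm_sub_sq_real (U h) h
      have hn : ‖U h‖ = ‖h‖ := U.norm_map h
      have hsym : inner (𝕜 := ℝ) (U h) h = inner (𝕜 := ℝ) h (U h) := real_inner_comm _ _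
      have hself : inner (𝕜 := ℝ) h h = ‖h‖ ^ 2 := real_inner_self_eq_norm_sq h
      have hz : ‖U h - h‖ ^ 2 = 0 := by rw [hexp, hn, hsym, h3, hself]; ring
      have hz2 : ‖U h - h‖ = 0 := pow_eq_zero_iff two_ne_zero |>.mp hz
      rw [norm_eq_zero, sub_eq_zero] at hz2
      exact hz2
    have h5 : (h : X → ℝ) ∘ (S e) =ᵐ[μ] (h : X → ℝ) := by
      calc (h : X → ℝ) ∘ (S e) =ᵐ[μ] (U h : X → ℝ) := (hUcoe h).symm
        _ = (h : X → ℝ) := by rw [h4]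
    obtain ⟨k, hk⟩ := herg.ae_eq_const_of_ae_eq_comp₀
      (MeasureTheory.Lp.aestronglyMeasurable h).aemeasurable.nullMeasurable h5
    exact ⟨k, hk⟩
  set F : Lp ℝ 2 μ := hf2.toLp f with hF
  set Cc : Lp ℝ 2 μ := MeasureTheory.Lp.const 2 μ c with hCc
  have hfint : Integrable f μ := (hf2.mono_exponent (by norm_num)).integrable le_rfl
  have hFCc : ((F - Cc : Lp ℝ 2 μ) : X → ℝ) =ᵐ[μ] fun x => f x - c := by
    filter_upwards [MeasureTheory.Lp.coeFn_sub F Cc, hf2.coeFn_toLp,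
      MeasureTheory.Lp.coeFn_const 2 μ c] with x h1 h2 h3
    rw [h1, Pi.sub_apply, h2, h3]; rfl
  have hkey : F - Cc ∈ W.topologicalClosure := by
    rw [← Submodule.orthogonal_orthogonal_eq_closure]
    rw [Submodule.mem_orthogonal]
    intro h hh
    obtain ⟨k, hk⟩ := hWperp h hh
    rw [MeasureTheory.L2.inner_def]
    have : ∀ᵐ a ∂μ, inner ℝ ((h : X → ℝ) a) (((F - Cc : Lp ℝ 2 μ) : X → ℝ) a) = k * (f a - c) := by
      filter_upwards [hk, hFCc] with a h1 h2
      rw [h1, h2]; simp [RCLike.inner_apply]; ring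
    rw [integral_congr_ae this, integral_const_mul, integral_sub hfint (integrable_const c)]
    simp [hc]
  -- now the limsup estimate
  have rnonneg : ∀ N, (0:ℝ) ≤ (eLpNorm
      (fun x => ((Φ N).card : ℝ)⁻¹ * ∑ u ∈ Φ N, f (S u x)) 2 μ).toReal :=
    fun N => ENNReal.toReal_nonneg
  have hcobdd : IsCoboundedUnder (· ≤ ·) atTop (fun N => (eLpNorm
      (fun x => ((Φ N).card : ℝ)⁻¹ * ∑ u ∈ Φ N, f (S u x)) 2 μ).toReal) :=
    isCoboundedUnder_le_of_eventually_le atTop (x := 0) (Eventually.of_forall rnonneg)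
  apply le_of_forall_pos_le_add
  intro ε hε
  -- approximate F - Cc by a coboundary
  have hmem : (F - Cc : Lp ℝ 2 μ) ∈ closure (W : Set (Lp ℝ 2 μ)) := by
    exact hkey
  obtain ⟨w, hwW, hwdist⟩ := Metric.mem_closure_iff.mp hmem (ε/2) (by linarith)
  obtain ⟨G, hG⟩ := hwW
  have hG' : G - U G = w := by simpa using hG
  clear_value U V W F Cc
  clear hUV hVcoe hWperp hmem hkey
  set g : X → ℝ := (G : X → ℝ) with hg
  have hgm : AEStronglyMeasurable g μ := MeasureTheory.Lp.aestronglyMeasurable G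
  have hgSm : ∀ u, AEStronglyMeasurable (fun x => g (S u x)) μ := fun u =>
    hgm.comp_quasiMeasurePreserving (hmp u).quasiMeasurePreserving
  set h0 : X → ℝ := fun x => f x - c - (g x - g (S e x)) with hh0def
  have hh0eq : ∀ y, h0 y = f y - c - (g y - g (S e y)) := fun y => rfl
  have hfm : AEStronglyMeasurable f μ := hf2.aestronglyMeasurable
  have hh0m : AEStronglyMeasurable h0 μ :=
    ((hfm.sub aestronglyMeasurable_const).sub (hgm.sub (hgSm e)))
  have hh0ae : h0 =ᵐ[μ] ((F - Cc - (G - U G) : Lp ℝ 2 μ) : X → ℝ) := by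
    filter_upwards [hFCc, MeasureTheory.Lp.coeFn_sub (F - Cc) (G - U G),
      MeasureTheory.Lp.coeFn_sub G (U G), hUcoe G] with x h1 h2 h3 h4
    rw [hh0def]
    simp only [h2, Pi.sub_apply, h1, h3, h4]
    rfl
  have hh0norm : eLpNorm h0 2 μ < ENNReal.ofReal (ε/2) := by
    rw [eLpNorm_congr_ae hh0ae]
    have : eLpNorm ((F - Cc - (G - U G) : Lp ℝ 2 μ) : X → ℝ) 2 μ
        = ENNReal.ofReal ‖F - Cc - (G - U G)‖ := by
      rw [MeasureTheory.Lp.norm_def,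
        ENNReal.ofReal_toReal (MeasureTheory.Lp.eLpNorm_ne_top _)]
    rw [this]
    apply ENNReal.ofReal_lt_ofReal_iff (by linarith) |>.mpr
    calc ‖F - Cc - (G - U G)‖ = dist (F - Cc) (G - U G) := (dist_eq_norm _ _).symm
      _ = dist (F - Cc) w := by rw [hG']
      _ < ε/2 := hwdist
  set Gn : ℝ := ‖G‖ with hGn
  have hGnn : (0:ℝ) ≤ Gn := hGn ▸ norm_nonneg G
  have hgnorm : eLpNorm g 2 μ = ENNReal.ofReal Gn := by
    rw [hGn, hg, MeasureTheory.Lp.norm_def,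
      ENNReal.ofReal_toReal (MeasureTheory.Lp.eLpNorm_ne_top G)]
  clear_value g h0 Gn
  clear hh0def hh0ae hg
  -- per-N estimate
  set D : ℕ → ℝ := fun N => (((((Φ N).image (fun x => e + x)) \ Φ N) ∪
      (Φ N \ ((Φ N).image (fun x => e + x)))).card : ℝ) / (Φ N).card with hD
  have hDG : Tendsto (fun N => D N * Gn) atTop (nhds 0) := by
    have h := (hΦ.2 e).mul_const Gn
    rw [zero_mul] at h
    exact h
  have hev : ∀ᶠ N in atTop, D N * Gn < ε/2 := by
    have h2 : (0:ℝ) < ε/2 := by linarith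
    exact hDG.eventually_lt_const h2
  have hDnonneg : ∀ N, 0 ≤ D N := by
    intro N
    rw [hD]
    positivity
  clear_value D
  apply Filter.limsup_le_of_le hcobdd
  filter_upwards [hev] with N hevN
  -- the main bound for a fixed N
  set s : Finset (Fin d → ℤ) := Φ N with hs
  have hsnon : s.Nonempty := hΦ.1 N
  have hcard : (0:ℝ) < s.card := by exact_mod_cast Finset.card_pos.mpr hsnon
  set s' : Finset (Fin d → ℤ) := s.image (fun x => e + x) with hs'
  clear_value s s'
  -- pointwise decomposition
  have hdecomp : (fun x => ((s.card : ℝ))⁻¹ * ∑ u ∈ s, f (S u x)) =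
      (fun x => ((s.card : ℝ))⁻¹ * ∑ u ∈ s, h0 (S u x)) + (fun _ => c) +
      (fun x => ((s.card : ℝ))⁻¹ * (∑ u ∈ s \ s', g (S u x) - ∑ u ∈ s' \ s, g (S u x))) := by
    funext x
    have e1 : ∀ u, f (S u x) = h0 (S u x) + c + (g (S u x) - g (S (e + u) x)) := by
      intro u
      have h' : g (S (e + u) x) = g (S e (S u x)) := by rw [hadd]
      rw [h', hh0eq]; ring
    have e2 : ∑ u ∈ s, g (S (e + u) x) = ∑ v ∈ s', g (S v x) := by
      rw [hs', Finset.sum_image]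
      intro a _ b _ hab
      exact add_left_cancel hab
    have e3 := sum_decomp_aux S f h0 g c s s' e x e1 e2
    show ((s.card : ℝ))⁻¹ * ∑ u ∈ s, f (S u x) = _ + _ + _
    rw [e3]
    have : ((s.card : ℝ))⁻¹ * ((s.card : ℝ) * c) = c := by
      exact inv_mul_cancel_left₀ hcard.ne' c
    simp only [Pi.add_apply]
    rw [mul_add, mul_add, this]
  -- eLpNorm bounds
  have havg : ∀ (φ : X → ℝ), AEStronglyMeasurable φ μ → ∀ t : Finset (Fin d → ℤ),
      eLpNorm (fun x => ∑ u ∈ t, φ (S u x)) 2 μ ≤ (t.card : ℝ≥0∞) * eLpNorm φ 2 μ := by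
    intro φ hφ t
    have heq : (fun x => ∑ u ∈ t, φ (S u x)) = ∑ u ∈ t, (fun x => φ (S u x)) := by
      funext x; simp
    rw [heq]
    calc eLpNorm (∑ u ∈ t, fun x => φ (S u x)) 2 μ
        ≤ ∑ u ∈ t, eLpNorm (fun x => φ (S u x)) 2 μ :=
          eLpNorm_sum_le (fun u _ =>
            hφ.comp_quasiMeasurePreserving (hmp u).quasiMeasurePreserving) (by norm_num)
      _ = ∑ u ∈ t, eLpNorm φ 2 μ := by
          refine Finset.sum_congr rfl (fun u _ => ?_)
          exact eLpNorm_comp_measurePreserving hφ (hmp u)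
      _ = (t.card : ℝ≥0∞) * eLpNorm φ 2 μ := by
          rw [Finset.sum_const, nsmul_eq_mul]
  have hsmul : ∀ (φ : X → ℝ) (r : ℝ),
      eLpNorm (fun x => r * φ x) 2 μ = (‖r‖₊ : ℝ≥0∞) * eLpNorm φ 2 μ := by
    intro φ r
    have : (fun x => r * φ x) = r • φ := by funext x; simp
    rw [this, eLpNorm_const_smul]
    rfl
  have hcinv : ((‖((s.card : ℝ))⁻¹‖₊ : ℝ≥0∞)) = ((s.card : ℝ≥0∞))⁻¹ := by
    rw [nnnorm_inv]
    rw [ENNReal.coe_inv (by simp [Finset.card_ne_zero_of_mem (hsnon.choose_spec)])]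
    congr 1
    simp [Real.nnnorm_natCast]
  have hcard0 : (s.card : ℝ≥0∞) ≠ 0 := by
    simp [Finset.card_ne_zero_of_mem (hsnon.choose_spec)]
  have hcardtop : (s.card : ℝ≥0∞) ≠ ⊤ := by simp
  -- bound for B1
  have hB1 : eLpNorm (fun x => ((s.card : ℝ))⁻¹ * ∑ u ∈ s, h0 (S u x)) 2 μ
      ≤ ENNReal.ofReal (ε/2) := by
    rw [hsmul _ _]
    calc (‖((s.card : ℝ))⁻¹‖₊ : ℝ≥0∞) * eLpNorm (fun x => ∑ u ∈ s, h0 (S u x)) 2 μ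
        ≤ (‖((s.card : ℝ))⁻¹‖₊ : ℝ≥0∞) * ((s.card : ℝ≥0∞) * eLpNorm h0 2 μ) := by
          gcongr
          exact havg h0 hh0m s
      _ = eLpNorm h0 2 μ := by
          rw [hcinv, ← mul_assoc, ENNReal.inv_mul_cancel hcard0 hcardtop, one_mul]
      _ ≤ ENNReal.ofReal (ε/2) := le_of_lt hh0norm
  -- bound for the constant part
  have hB2 : eLpNorm (fun _ : X => c) 2 μ = ENNReal.ofReal |c| := by
    rw [eLpNorm_const c (by norm_num) (IsProbabilityMeasure.ne_zero μ)]
    simp [Real.enorm_eq_ofReal_abs]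
  -- bound for B3
  have hB3 : eLpNorm (fun x => ((s.card : ℝ))⁻¹ *
      (∑ u ∈ s \ s', g (S u x) - ∑ u ∈ s' \ s, g (S u x))) 2 μ
      ≤ ENNReal.ofReal (D N * Gn) := by
    rw [hsmul _ _]
    have hsub : eLpNorm (fun x => ∑ u ∈ s \ s', g (S u x) - ∑ u ∈ s' \ s, g (S u x)) 2 μ
        ≤ ((s \ s').card : ℝ≥0∞) * eLpNorm g 2 μ + ((s' \ s).card : ℝ≥0∞) * eLpNorm g 2 μ := by
      calc eLpNorm (fun x => ∑ u ∈ s \ s', g (S u x) - ∑ u ∈ s' \ s, g (S u x)) 2 μ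
          ≤ eLpNorm (fun x => ∑ u ∈ s \ s', g (S u x)) 2 μ +
            eLpNorm (fun x => ∑ u ∈ s' \ s, g (S u x)) 2 μ := by
            apply eLpNorm_sub_le ?_ ?_ (by norm_num)
            · exact (Finset.aestronglyMeasurable_fun_sum _ (fun u _ => hgSm u))
            · exact (Finset.aestronglyMeasurable_fun_sum _ (fun u _ => hgSm u))
        _ ≤ _ := add_le_add (havg g hgm _) (havg g hgm _)
    calc (‖((s.card : ℝ))⁻¹‖₊ : ℝ≥0∞) *
        eLpNorm (fun x => ∑ u ∈ s \ s', g (S u x) - ∑ u ∈ s' \ s, g (S u x)) 2 μ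
        ≤ (‖((s.card : ℝ))⁻¹‖₊ : ℝ≥0∞) *
          ((((s \ s').card : ℝ≥0∞)) * eLpNorm g 2 μ + (((s' \ s).card : ℝ≥0∞)) * eLpNorm g 2 μ) :=
          mul_le_mul_right hsub _
      _ = ENNReal.ofReal ((((s \ s').card : ℝ) + ((s' \ s).card : ℝ)) / (s.card : ℝ) * Gn) := by
          rw [hgnorm]
          exact ennreal_arith _ _ _ Gn hGnn
      _ = ENNReal.ofReal (D N * Gn) := by
          congr 1
          simp only [hD]
          rw [← hs, ← hs']
          have hunion : (((s' \ s) ∪ (s \ s')).card : ℝ)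
              = ((s \ s').card : ℝ) + ((s' \ s).card : ℝ) := by
            rw [Finset.card_union_of_disjoint disjoint_sdiff_sdiff]
            push_cast
            try ring
          rw [hunion]
          try ring
  -- combine
  have hcomb : eLpNorm (fun x => ((s.card : ℝ))⁻¹ * ∑ u ∈ s, f (S u x)) 2 μ
      ≤ ENNReal.ofReal (ε/2 + |c| + D N * Gn) := by
    rw [hdecomp]
    calc eLpNorm ((fun x => ((s.card : ℝ))⁻¹ * ∑ u ∈ s, h0 (S u x)) + (fun _ => c) +
        (fun x => ((s.card : ℝ))⁻¹ * (∑ u ∈ s \ s', g (S u x) - ∑ u ∈ s' \ s, g (S u x)))) 2 μ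
        ≤ eLpNorm ((fun x => ((s.card : ℝ))⁻¹ * ∑ u ∈ s, h0 (S u x)) + (fun _ => c)) 2 μ +
          eLpNorm (fun x => ((s.card : ℝ))⁻¹ *
            (∑ u ∈ s \ s', g (S u x) - ∑ u ∈ s' \ s, g (S u x))) 2 μ := by
          apply eLpNorm_add_le ?_ ?_ (by norm_num)
          · exact ((Finset.aestronglyMeasurable_fun_sum _ (fun u _ =>
              hh0m.comp_quasiMeasurePreserving (hmp u).quasiMeasurePreserving)).const_mul _).add
              aestronglyMeasurable_const
          · exact ((Finset.aestronglyMeasurable_fun_sum _ (fun u _ => hgSm u)).sub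
              (Finset.aestronglyMeasurable_fun_sum _ (fun u _ => hgSm u))).const_mul _
      _ ≤ (eLpNorm (fun x => ((s.card : ℝ))⁻¹ * ∑ u ∈ s, h0 (S u x)) 2 μ +
            eLpNorm (fun _ : X => c) 2 μ) +
          eLpNorm (fun x => ((s.card : ℝ))⁻¹ *
            (∑ u ∈ s \ s', g (S u x) - ∑ u ∈ s' \ s, g (S u x))) 2 μ := by
          gcongr
          apply eLpNorm_add_le ?_ aestronglyMeasurable_const (by norm_num)
          exact (Finset.aestronglyMeasurable_fun_sum _ (fun u _ =>
            hh0m.comp_quasiMeasurePreserving (hmp u).quasiMeasurePreserving)).const_mul _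
      _ ≤ (ENNReal.ofReal (ε/2) + ENNReal.ofReal |c|) + ENNReal.ofReal (D N * Gn) := by
          gcongr <;> first
            | exact hB1
            | exact le_of_eq hB2
            | exact hB3
      _ = ENNReal.ofReal (ε/2 + |c| + D N * Gn) := by
          have hDN : (0:ℝ) ≤ D N * Gn := mul_nonneg (hDnonneg N) hGnn
          rw [← ENNReal.ofReal_add (by positivity) (abs_nonneg c),
            ← ENNReal.ofReal_add (by positivity) hDN]
  calc (eLpNorm (fun x => ((s.card : ℝ))⁻¹ * ∑ u ∈ s, f (S u x)) 2 μ).toReal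
      ≤ ε/2 + |c| + D N * Gn := by
        apply ENNReal.toReal_le_of_le_ofReal ?_ hcomb
        have h2 : (0:ℝ) ≤ D N * Gn := mul_nonneg (hDnonneg N) hGnn
        have h3 := abs_nonneg c
        linarith
    _ ≤ |c| + ε := by linarith
end MeanErgodic

theorem jensen_step {Y : Type*} [ms : MeasurableSpace Y] (ρ : Measure Y) [IsProbabilityMeasure ρ]
    (m : MeasurableSpace Y) (hm : m ≤ ms) (F : Y → ℝ) (hF : @Measurable Y ℝ ms _ F)
    (R : ℝ) (hR : ∀ x, |F x| ≤ R) :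
    (∫ x, F x ∂ρ)^2 ≤ ∫ x, (MeasureTheory.condExp m ρ F x) * (MeasureTheory.condExp m ρ F x) ∂ρ := by
  haveI : IsFiniteMeasure (ρ.trim hm) := isFiniteMeasure_trim hm
  have hFtop : MemLp F ⊤ ρ := memLp_top_of_bound (hF.aestronglyMeasurable : @AEStronglyMeasurable Y ℝ _ ms ms F ρ) R
    (Eventually.of_forall (fun x => by simpa [Real.norm_eq_abs] using hR x))
  have hFi : Integrable F ρ := (hFtop.mono_exponent le_top).integrable le_rfl
  set h := MeasureTheory.condExp m ρ F with hh
  have hbd : ∀ᵐ x ∂ρ, |h x| ≤ (Real.toNNReal R : ℝ) :=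
    ae_bdd_condExp_of_ae_bdd (Eventually.of_forall
      (fun x => (hR x).trans (Real.le_coe_toNNReal R)))
  have hmem : MemLp h 2 ρ := MemLp.of_bound
    ((stronglyMeasurable_condExp.mono hm).aestronglyMeasurable) ((Real.toNNReal R : ℝ)) (by
      filter_upwards [hbd] with x hx
      rw [Real.norm_eq_abs]
      exact hx)
  have hvar := ProbabilityTheory.variance_nonneg h ρ
  rw [ProbabilityTheory.variance_eq_sub hmem] at hvar
  have hint : ∫ x, h x ∂ρ = ∫ x, F x ∂ρ := integral_condExp hm
  have h2 : (∫ x, F x ∂ρ)^2 ≤ ∫ x, (h^2) x ∂ρ := by rw [← hint]; linarith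
  have h3 : ∫ x, (h^2) x ∂ρ = ∫ x, h x * h x ∂ρ := by
    apply integral_congr_ae
    refine Eventually.of_forall (fun x => ?_)
    simp [pow_two]
  linarith

theorem marg_null {X : Type*} [MeasurableSpace X] {k : ℕ} (Tm : X → X)
    (ν : ∀ k, Measure (Cube X k))
    (hprob : IsProbabilityMeasure (ν k)) (hprob' : IsProbabilityMeasure (ν (k+1)))
    (hid : ∀ F G : Cube X k → ℝ, Measurable F → Measurable G →
      (∃ C, ∀ x, |F x| ≤ C) → (∃ C, ∀ x, |G x| ≤ C) →
      ∫ (p : Cube X k × Cube X k), F p.1 * G p.2 ∂(ν (k + 1)) =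
        ∫ x, (MeasureTheory.condExp (MeasurableSpace.invariants (cubeMap Tm k)) (ν k) F x) *
          (MeasureTheory.condExp (MeasurableSpace.invariants (cubeMap Tm k)) (ν k) G x) ∂(ν k))
    (B : Set (Cube X k)) (hB : MeasurableSet B) (hB0 : ν k B = 0) :
    ν (k+1) (Prod.fst ⁻¹' B) = 0 ∧ ν (k+1) (Prod.snd ⁻¹' B) = 0 := by
  haveI := hprob; haveI := hprob'
  have hm := MeasurableSpace.invariants_le (cubeMap Tm k)
  haveI : IsFiniteMeasure ((ν k).trim hm) := isFiniteMeasure_trim hm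
  set χ : Cube X k → ℝ := B.indicator (fun _ => (1:ℝ)) with hχ
  have hχm : Measurable χ := measurable_const.indicator hB
  have hχbd : ∀ x, |χ x| ≤ 1 := by
    intro x
    rw [hχ]
    by_cases h : x ∈ B <;> simp [Set.indicator_of_mem, Set.indicator_of_notMem, h]
  have hχint : Integrable χ (ν k) := (integrable_const (1:ℝ)).indicator hB
  have hχI : ∫ x, χ x ∂(ν k) = 0 := by
    rw [hχ, integral_indicator_const (1:ℝ) hB, measureReal_def, hB0]
    simp
  have hcond1 : MeasureTheory.condExp (MeasurableSpace.invariants (cubeMap Tm k)) (ν k) (fun _ => (1:ℝ)) = fun _ => (1:ℝ) :=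
    condExp_const hm (1:ℝ)
  have hcondχ : ∫ x, MeasureTheory.condExp (MeasurableSpace.invariants (cubeMap Tm k)) (ν k) χ x ∂(ν k) = 0 := by
    rw [integral_condExp hm, hχI]
  constructor
  · have hid1 := hid χ (fun _ => (1:ℝ)) hχm measurable_const ⟨1, hχbd⟩
      ⟨1, fun _ => by norm_num⟩
    rw [hcond1] at hid1
    simp only [mul_one] at hid1
    rw [hcondχ] at hid1
    have hLHS : (fun p : Cube X k × Cube X k => χ p.1)
        = (Prod.fst ⁻¹' B).indicator (fun _ => (1:ℝ)) := by
      funext p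
      rw [hχ]
      by_cases h : p.1 ∈ B <;>
        simp [Set.indicator_of_mem, Set.indicator_of_notMem, h, Set.mem_preimage]
    rw [hLHS] at hid1
    have hid1 : (ν (k+1)).real (Prod.fst ⁻¹' B) • (1:ℝ) = 0 :=
      (integral_indicator_const (μ := ν (k+1)) (1:ℝ) (hB.preimage measurable_fst)).symm.trans hid1
    rw [measureReal_def] at hid1
    simp only [smul_eq_mul, mul_one] at hid1
    rw [ENNReal.toReal_eq_zero_iff] at hid1
    rcases hid1 with h | h
    · exact h
    · exact absurd h (measure_ne_top _ _)
  · have hid1 := hid (fun _ => (1:ℝ)) χ measurable_const hχm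
      ⟨1, fun _ => by norm_num⟩ ⟨1, hχbd⟩
    rw [hcond1] at hid1
    simp only [one_mul] at hid1
    rw [hcondχ] at hid1
    have hLHS : (fun p : Cube X k × Cube X k => χ p.2)
        = (Prod.snd ⁻¹' B).indicator (fun _ => (1:ℝ)) := by
      funext p
      rw [hχ]
      by_cases h : p.2 ∈ B <;>
        simp [Set.indicator_of_mem, Set.indicator_of_notMem, h, Set.mem_preimage]
    rw [hLHS] at hid1
    have hid1 : (ν (k+1)).real (Prod.snd ⁻¹' B) • (1:ℝ) = 0 :=
      (integral_indicator_const (μ := ν (k+1)) (1:ℝ) (hB.preimage measurable_snd)).symm.trans hid1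
    rw [measureReal_def] at hid1
    simp only [smul_eq_mul, mul_one] at hid1
    rw [ENNReal.toReal_eq_zero_iff] at hid1
    rcases hid1 with h | h
    · exact h
    · exact absurd h (measure_ne_top _ _)

theorem abs_integral_le_hkSeminorm {X : Type*} [MeasurableSpace X] (μ : Measure X)
    [IsProbabilityMeasure μ] (Tm : X → X) (ν : ∀ k, Measure (Cube X k))
    (hν : IsHKSeq μ Tm ν) (f : X → ℝ) (hf : MemLp f ⊤ μ) :
    |∫ x, f x ∂μ| ≤ hkSeminorm ν 2 f := by
  obtain ⟨hν0, hνk⟩ := hν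
  haveI h0P : IsProbabilityMeasure (ν 0) := (hνk 0).1
  haveI h1P : IsProbabilityMeasure (ν 1) := (hνk 1).1
  haveI h2P : IsProbabilityMeasure (ν 2) := (hνk 2).1
  obtain ⟨g0, hg0sm, hfg0⟩ := hf.1
  set R := (eLpNorm f ⊤ μ).toReal with hRdef
  have hR0 : (0:ℝ) ≤ R := ENNReal.toReal_nonneg
  have hfbd : ∀ᵐ x ∂μ, |f x| ≤ R := by
    have h1 : eLpNormEssSup f μ ≠ ⊤ := by
      rw [← eLpNorm_exponent_top]; exact hf.2.ne
    filter_upwards [MeasureTheory.ae_le_eLpNormEssSup (f := f) (μ := μ)] with x hx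
    have h2 : ((‖f x‖₊ : ℝ≥0∞)).toReal ≤ (eLpNormEssSup f μ).toReal :=
      ENNReal.toReal_mono h1 hx
    rw [hRdef, eLpNorm_exponent_top]
    simpa [Real.norm_eq_abs] using h2
  set g : X → ℝ := fun x => if |g0 x| ≤ R then g0 x else 0 with hgdef
  have hgm : Measurable g :=
    Measurable.ite (measurableSet_le hg0sm.measurable.abs measurable_const)
      hg0sm.measurable measurable_const
  have hgbd : ∀ x, |g x| ≤ R := by
    intro x
    rw [hgdef]
    dsimp only
    split_ifs with h
    · exact h
    · simpa using hR0
  have hfg : f =ᵐ[μ] g := by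
    filter_upwards [hfg0, hfbd] with x h1 h2
    rw [hgdef]
    dsimp only
    have hb : |g0 x| ≤ R := by rw [← h1]; exact h2
    rw [if_pos hb, ← h1]
  -- level 0 Jensen
  have hm0 := MeasurableSpace.invariants_le (cubeMap Tm 0)
  have hid0 := (hνk 0).2 g g hgm hgm ⟨R, hgbd⟩ ⟨R, hgbd⟩
  have hj0 : (∫ x, g x ∂(ν 0))^2 ≤ ∫ (p : Cube X 0 × Cube X 0), g p.1 * g p.2 ∂(ν 1) := by
    rw [hid0]
    exact jensen_step (ν 0) _ hm0 g hgm R hgbd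
  -- level 1 Jensen
  set F1 : Cube X 1 → ℝ := fun p => g p.1 * g p.2 with hF1def
  have hF1m : Measurable F1 := (hgm.comp measurable_fst).mul (hgm.comp measurable_snd)
  have hF1bd : ∀ p, |F1 p| ≤ R * R := by
    intro p
    rw [hF1def]
    dsimp only
    rw [abs_mul]
    exact mul_le_mul (hgbd _) (hgbd _) (abs_nonneg _) hR0
  have hm1 := MeasurableSpace.invariants_le (cubeMap Tm 1)
  have hid1 := (hνk 1).2 F1 F1 hF1m hF1m ⟨R*R, hF1bd⟩ ⟨R*R, hF1bd⟩
  have hj1 : (∫ q, F1 q ∂(ν 1))^2 ≤ ∫ (p : Cube X 1 × Cube X 1), F1 p.1 * F1 p.2 ∂(ν 2) := by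
    rw [hid1]
    exact jensen_step (ν 1) _ hm1 F1 hF1m (R*R) hF1bd
  have hcube : ∫ (p : Cube X 1 × Cube X 1), F1 p.1 * F1 p.2 ∂(ν 2)
      = ∫ p, cubeFun g 2 p ∂(ν 2) := by
    apply integral_congr_ae
    refine Eventually.of_forall (fun p => ?_)
    simp [cubeFun, hF1def]
  have hIg : ∫ x, g x ∂(ν 0) = ∫ x, f x ∂μ := by
    rw [hν0]
    exact integral_congr_ae hfg.symm
  set c := ∫ x, f x ∂μ with hcdef
  have h4 : c^4 ≤ ∫ p, cubeFun g 2 p ∂(ν 2) := by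
    have a0 : c^2 ≤ ∫ q, F1 q ∂(ν 1) := by
      rw [← hIg]
      exact hj0
    have a1 : (c^2)^2 ≤ (∫ q, F1 q ∂(ν 1))^2 := pow_le_pow_left₀ (sq_nonneg c) a0 2
    calc c^4 = (c^2)^2 := by ring
      _ ≤ (∫ q, F1 q ∂(ν 1))^2 := a1
      _ ≤ ∫ (p : Cube X 1 × Cube X 1), F1 p.1 * F1 p.2 ∂(ν 2) := hj1
      _ = _ := hcube
  -- replace g by f in the ν 2 integral
  have hnull : μ {x | f x ≠ g x} = 0 := ae_iff.mp hfg
  obtain ⟨A, hsubA, hAm, hA0⟩ := exists_measurable_superset_of_null hnull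
  have hmarg0 := marg_null (k := 0) Tm ν h0P h1P (hνk 0).2 A hAm (by rw [hν0]; exact hA0)
  set B1 : Set (Cube X 1) := Prod.fst ⁻¹' A ∪ Prod.snd ⁻¹' A with hB1def
  have hB1m : MeasurableSet B1 := (hAm.preimage measurable_fst).union (hAm.preimage measurable_snd)
  have hB10 : ν 1 B1 = 0 := measure_union_null hmarg0.1 hmarg0.2
  have hmarg1 := marg_null (k := 1) Tm ν h1P h2P (hνk 1).2 B1 hB1m hB10
  have hB20 : ν 2 (Prod.fst ⁻¹' B1 ∪ Prod.snd ⁻¹' B1) = 0 :=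
    measure_union_null hmarg1.1 hmarg1.2
  have hfeq : ∀ y, y ∉ A → f y = g y := by
    intro y hy
    by_contra hne
    exact hy (hsubA hne)
  have hae2 : ∀ᵐ p ∂(ν 2), cubeFun f 2 p = cubeFun g 2 p := by
    rw [ae_iff]
    apply measure_mono_null _ hB20
    intro p hp
    by_contra hpB
    apply hp
    simp only [hB1def, Set.mem_union, Set.mem_preimage, not_or] at hpB
    obtain ⟨h1, h2⟩ := hpB
    have h11 : p.1.1 ∉ A := fun h => h1 (Or.inl h)
    have h12 : p.1.2 ∉ A := fun h => h1 (Or.inr h)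
    have h21 : p.2.1 ∉ A := fun h => h2 (Or.inl h)
    have h22 : p.2.2 ∉ A := fun h => h2 (Or.inr h)
    show cubeFun f 2 p = cubeFun g 2 p
    simp only [cubeFun]
    rw [hfeq _ h11, hfeq _ h12, hfeq _ h21, hfeq _ h22]
  have hswap : ∫ p, cubeFun f 2 p ∂(ν 2) = ∫ p, cubeFun g 2 p ∂(ν 2) :=
    integral_congr_ae hae2
  have hI : c^4 ≤ ∫ x, cubeFun f 2 x ∂(ν 2) := by
    rw [hswap]
    exact h4
  have habs : (|c|^(4:ℕ) : ℝ) = c^4 := by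
    rw [← abs_pow]
    exact abs_of_nonneg (by positivity)
  calc |c| = ((|c|^(4:ℕ) : ℝ)) ^ ((1:ℝ)/4) := by
        rw [← Real.rpow_natCast |c| 4, ← Real.rpow_mul (abs_nonneg c)]
        norm_num
    _ ≤ (∫ x, cubeFun f 2 x ∂(ν 2)) ^ ((1:ℝ)/4) := by
        apply Real.rpow_le_rpow (by positivity) (by rw [habs]; exact hI) (by norm_num)
    _ = hkSeminorm ν 2 f := by
        unfold hkSeminorm
        norm_num

/-- For a freely generated totally ergodic system and nonconstant (homogeneous) linear
maps `p_1, …, p_l : ℤ^d → ℤ`, the averages `(1/|Φ_N|) ∑_u T_1^{p_1(u)} ⋯ T_l^{p_l(u)} f`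
are asymptotically bounded in `L²(μ)` by `C ⦀f⦀₂`, where `⦀·⦀₂` is the Host–Kra
seminorm of order `2` (with respect to any ergodic product `T_1^{c_1} ⋯ T_l^{c_l}`,
on which it does not depend). -/

theorem linear_average_bounded_by_seminorm_two
    {X : Type*} [MeasurableSpace X] (μ : Measure X) [IsProbabilityMeasure μ]
    {l d : ℕ} (T : Fin l → Equiv.Perm X)
    (hmp : ∀ i, MeasurePreserving (⇑(T i)) μ μ)
    (hmp' : ∀ i, MeasurePreserving (⇑(T i)⁻¹) μ μ)
    (hcomm : ∀ i j, Commute (T i) (T j))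
    (herg : ∀ c : Fin l → ℤ, c ≠ 0 →
      Ergodic (⇑((List.ofFn fun j => T j ^ c j).prod)) μ)
    (a : Fin l → Fin d → ℤ) (ha : ∀ j, a j ≠ 0) :
    ∃ C : ℝ, ∀ f : X → ℝ, MemLp f ⊤ μ →
      ∀ Φ : ℕ → Finset (Fin d → ℤ), IsFolner Φ →
      ∀ c : Fin l → ℤ, c ≠ 0 →
      ∀ ν : ∀ k, Measure (Cube X k),
        IsHKSeq μ (⇑((List.ofFn fun j => T j ^ c j).prod)) ν →
        Filter.limsup
          (fun N => (eLpNorm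
            (fun x => ((Φ N).card : ℝ)⁻¹ * ∑ u ∈ Φ N,
              f (((List.ofFn fun j => T j ^ (∑ t, a j t * u t)).prod) x)) 2 μ).toReal)
          Filter.atTop
        ≤ C * hkSeminorm ν 2 f := by
  refine ⟨1, ?_⟩
  intro f hf Φ hΦ c hc ν hν
  rcases Nat.eq_zero_or_pos l with hl | hl
  · subst hl
    exact absurd (funext fun j => j.elim0) hc
  -- pick a coordinate where the action is ergodic
  set j0 : Fin l := ⟨0, hl⟩ with hj0
  obtain ⟨t0, ht0⟩ := Function.ne_iff.mp (ha j0)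
  -- the Z^d action
  set S : (Fin d → ℤ) → X → X :=
    fun u => ⇑((List.ofFn fun j => T j ^ (∑ t, a j t * u t)).prod) with hSdef
  have hSmp : ∀ u, MeasurePreserving (S u) μ μ := by
    intro u
    apply mp_list_prod
    intro σ hσ
    rw [List.mem_ofFn] at hσ
    obtain ⟨j, rfl⟩ := hσ
    exact mp_zpow (T j) (hmp j) (hmp' j) _
  have hSadd : ∀ u v x, S (u + v) x = S u (S v x) := by
    intro u v x
    have hsum : ∀ j, (∑ t, a j t * (u + v) t) = (∑ t, a j t * u t) + (∑ t, a j t * v t) := by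
      intro j
      rw [← Finset.sum_add_distrib]
      refine Finset.sum_congr rfl (fun t _ => ?_)
      simp [Pi.add_apply]
      ring
    have hprod : (List.ofFn fun j => T j ^ (∑ t, a j t * (u + v) t)).prod
        = (List.ofFn fun j => T j ^ (∑ t, a j t * u t)).prod *
          (List.ofFn fun j => T j ^ (∑ t, a j t * v t)).prod := by
      have : (fun j => T j ^ (∑ t, a j t * (u + v) t))
          = fun j => (T j ^ (∑ t, a j t * u t)) * (T j ^ (∑ t, a j t * v t)) :=
        funext fun j => by rw [hsum j, zpow_add]
      rw [this]
      exact ofFn_prod_mul _ _ (fun i j => (hcomm i j).zpow_zpow _ _)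
    rw [hSdef]
    dsimp only
    rw [hprod]
    rfl
  have hSzero : ∀ x, S 0 x = x := by
    intro x
    rw [hSdef]
    dsimp only
    have h1 : (fun j => T j ^ (∑ t, a j t * (0 : Fin d → ℤ) t)) = fun _ : Fin l => (1 : Equiv.Perm X) := by
      funext j
      simp
    rw [h1]
    have h2 : (List.ofFn fun _ : Fin l => (1 : Equiv.Perm X)).prod = 1 := by
      apply List.prod_eq_one
      intro y hy
      rw [List.mem_ofFn] at hy
      obtain ⟨i, rfl⟩ := hy
      rfl
    rw [h2]
    rfl
  -- ergodicity of the generator S e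
  set e : Fin d → ℤ := Pi.single t0 (1:ℤ) with hedef
  have hsing : ∀ j, (∑ t, a j t * e t) = a j t0 := by
    intro j
    rw [hedef]
    rw [Finset.sum_eq_single t0]
    · simp
    · intro b _ hb
      simp [Pi.single_apply, hb]
    · intro h
      exact absurd (Finset.mem_univ t0) h
  have hergS : Ergodic (S e) μ := by
    have hv : (fun j => a j t0) ≠ 0 := by
      intro h
      apply ht0
      simpa using congrFun h j0
    have h1 := herg (fun j => a j t0) hv
    have hfun : (fun j => T j ^ (∑ t, a j t * e t)) = (fun j => T j ^ (fun j => a j t0) j) := by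
      funext j
      rw [hsing j]
    have h2 : S e = ⇑((List.ofFn fun j => T j ^ (fun j => a j t0) j).prod) := by
      rw [hSdef]
      dsimp only
      rw [hfun]
    rw [h2]
    exact h1
  have hlim := mean_ergodic_limsup S hSmp hSadd hSzero e hergS f hf Φ hΦ
  have habs := abs_integral_le_hkSeminorm μ (⇑((List.ofFn fun j => T j ^ c j).prod)) ν hν f hf
  rw [one_mul]
  exact le_trans hlim habs
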